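/- Let $\mathcal{C}$ be an abelian category and $X$ an exact, locally nilpotent endofunctor. The monomorphism category $\operatorname{Mono}(X)$, i.e. the full subcategory of $\mathcal{C}^{T(X)}$ of objects whose structure map $h_{\mathsf{M}}\colon X(M) \to M$ is a monomorphism, is a resolving subcategory of $\mathcal{C}^{T(X)}$ (generating, closed under extensions, kernels of epimorphisms, and direct summands) and is moreover closed under subobjects. -/

import Mathlib

open CategoryTheory Limits

universe v u

variable {C : Type u} [Category.{v} C]

/-- The power `X^n` of an endofunctor, with `X^(n+1) = X^n ⋙ X`. -/
def fpow (X : C ⥤ C) : ℕ → (C ⥤ C)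
  | 0 => 𝟭 C
  | n + 1 => fpow X n ⋙ X

/-- `X` is locally nilpotent if every object is annihilated by some power of `X`. -/
def LocallyNilpotent (X : C ⥤ C) : Prop :=
  ∀ M : C, ∃ n : ℕ, IsZero ((fpow X n).obj M)

/-- The category `(X ⇓ Id)` of `X`-modules, identified with the Eilenberg–Moore category
of the free monad on `X`. -/
structure XMod (X : C ⥤ C) : Type max u v where
  carrier : C
  str : X.obj carrier ⟶ carrier

/-- Morphisms of `X`-modules. -/
@[ext]
structure XModHom {X : C ⥤ C} (M N : XMod X) : Type v where
  hom : M.carrier ⟶ N.carrier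
  comm : M.str ≫ hom = X.map hom ≫ N.str

instance (X : C ⥤ C) : Category (XMod X) where
  Hom := XModHom
  id M := ⟨𝟙 M.carrier, by simp⟩
  comp f g := ⟨f.hom ≫ g.hom, by
    rw [← Category.assoc, f.comm, Category.assoc, g.comm, ← Category.assoc, ← Functor.map_comp]⟩
  id_comp f := by apply XModHom.ext; simp [CategoryStruct.id, CategoryStruct.comp]
  comp_id f := by apply XModHom.ext; simp [CategoryStruct.id, CategoryStruct.comp]
  assoc f g h := by apply XModHom.ext; simp [CategoryStruct.comp]

@[simp] lemma XMod.id_hom {X : C ⥤ C} (M : XMod X) : (𝟙 M : XModHom M M).hom = 𝟙 M.carrier := rfl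
@[simp] lemma XMod.comp_hom {X : C ⥤ C} {M N P : XMod X} (f : M ⟶ N) (g : N ⟶ P) :
    (f ≫ g).hom = f.hom ≫ g.hom := rfl

/-- `F` is the free `X`-module `f₁(N)` on `N`, encoded via the universal
property of the free–forgetful adjunction `f₁ ⊣ f⋆`. -/
structure IsFreeXModOn (X : C ⥤ C) (F : XMod X) (N : C) where
  unit : N ⟶ F.carrier
  lift : ∀ (P : XMod X), (N ⟶ P.carrier) → (F ⟶ P)
  fac : ∀ (P : XMod X) (g : N ⟶ P.carrier), unit ≫ (lift P g).hom = g
  uniq : ∀ (P : XMod X) (g : N ⟶ P.carrier) (k : F ⟶ P), unit ≫ k.hom = g → k = lift P g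


section AuxResolving

open ZeroObject

variable [Abelian C]

/-- If the second summand is zero, the biproduct is the first factor. -/
@[simps]
noncomputable def biprodIsoLeft {A Z : C} (hZ : IsZero Z) : A ⊞ Z ≅ A where
  hom := biprod.fst
  inv := biprod.inl
  hom_inv_id := by
    apply biprod.hom_ext
    · simp
    · exact hZ.eq_of_tgt _ _
  inv_hom_id := by simp

/-- If the first summand is zero, the biproduct is the second factor. -/
@[simps]
noncomputable def biprodIsoRight {Z A : C} (hZ : IsZero Z) : Z ⊞ A ≅ A where
  hom := biprod.snd
  inv := biprod.inr
  hom_inv_id := by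
    apply biprod.hom_ext
    · exact hZ.eq_of_tgt _ _
    · simp
  inv_hom_id := by simp

/-- The cokernel of a biproduct map is the biproduct of the cokernels. -/
noncomputable def cokernelBiprodMapIso {W X Y Z : C} (f : W ⟶ Y) (g : X ⟶ Z) :
    cokernel (biprod.map f g) ≅ cokernel f ⊞ cokernel g := by
  have w : biprod.map f g ≫ biprod.map (cokernel.π f) (cokernel.π g) = 0 := by
    apply biprod.hom_ext' <;> simp
  refine IsColimit.coconePointUniqueUpToIso (cokernelIsCokernel (biprod.map f g))
    (CokernelCofork.IsColimit.ofπ' (biprod.map (cokernel.π f) (cokernel.π g)) w ?_)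
  intro A k hk
  have h1 : f ≫ biprod.inl ≫ k = 0 := by
    rw [← biprod.inl_map_assoc f g, hk, comp_zero]
  have h2 : g ≫ biprod.inr ≫ k = 0 := by
    rw [← biprod.inr_map_assoc f g, hk, comp_zero]
  refine ⟨biprod.desc (cokernel.desc f (biprod.inl ≫ k) h1)
      (cokernel.desc g (biprod.inr ≫ k) h2), ?_⟩
  apply biprod.hom_ext' <;> simp

lemma isZero_cokernel_id (A : C) : IsZero (cokernel (𝟙 A)) := by
  rw [IsZero.iff_id_eq_zero, ← cancel_epi (cokernel.π (𝟙 A))]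
  simp [cokernel.π_of_epi]

variable (X : C ⥤ C)

/-- Truncated free module carriers. -/
noncomputable def Fc (A : C) : ℕ → C
  | 0 => 0
  | n + 1 => A ⊞ X.obj (Fc A n)

/-- Transition maps between the truncated free module carriers. -/
noncomputable def fu (A : C) : ∀ n : ℕ, Fc X A n ⟶ Fc X A (n + 1)
  | 0 => 0
  | n + 1 => biprod.map (𝟙 A) (X.map (fu A n))

/-- The action maps on the truncated free module carriers. -/
noncomputable def fp {A : C} (h : X.obj A ⟶ A) : ∀ n : ℕ, Fc X A n ⟶ A
  | 0 => 0
  | n + 1 => biprod.desc (𝟙 A) (X.map (fp h n) ≫ h)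

lemma fu_fp {A : C} (h : X.obj A ⟶ A) : ∀ n : ℕ, fu X A n ≫ fp X h (n + 1) = fp X h n
  | 0 => (isZero_zero C).eq_of_src _ _
  | n + 1 => by
    show biprod.map (𝟙 A) (X.map (fu X A n)) ≫
      biprod.desc (𝟙 A) (X.map (fp X h (n + 1)) ≫ h) = biprod.desc (𝟙 A) (X.map (fp X h n) ≫ h)
    apply biprod.hom_ext'
    · simp
    · simp only [biprod.inr_map_assoc, biprod.inr_desc, ← Functor.map_comp_assoc,
        fu_fp h n]

variable [PreservesFiniteLimits X] [PreservesFiniteColimits X]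

lemma mono_fu (A : C) : ∀ n : ℕ, Mono (fu X A n)
  | 0 => ⟨fun g g' _ => (isZero_zero C).eq_of_tgt g g'⟩
  | n + 1 => by
    haveI := mono_fu A n
    show Mono (biprod.map (𝟙 A) (X.map (fu X A n)))
    infer_instance

lemma cok_fu (A : C) : ∀ n : ℕ, Nonempty (cokernel (fu X A n) ≅ (fpow X n).obj A)
  | 0 => by
    have h0 : fu X A 0 = 0 := rfl
    have hz : IsZero (X.obj (0 : C)) := X.map_isZero (isZero_zero C)
    exact ⟨(cokernel.mapIso _ _ (Iso.refl _) (Iso.refl _) (by simp [h0])).symm ≪≫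
      cokernelZeroIsoTarget ≪≫ biprodIsoLeft hz⟩
  | n + 1 => by
    obtain ⟨e⟩ := cok_fu A n
    have h0 : fu X A (n + 1) = biprod.map (𝟙 A) (X.map (fu X A n)) := rfl
    rw [h0]
    exact ⟨cokernelBiprodMapIso (𝟙 A) (X.map (fu X A n)) ≪≫
      biprodIsoRight (isZero_cokernel_id A) ≪≫
      (PreservesCokernel.iso X (fu X A n)).symm ≪≫ X.mapIso e⟩

lemma isIso_fu (A : C) (n : ℕ) (hA : IsZero ((fpow X n).obj A)) : IsIso (fu X A n) := by
  haveI := mono_fu X A n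
  obtain ⟨e⟩ := cok_fu X A n
  haveI : Epi (fu X A n) := Preadditive.epi_of_isZero_cokernel _ (hA.of_iso e)
  exact isIso_of_mono_of_epi _

end AuxResolving

/-- Let `C` be abelian and `X` exact and locally nilpotent. The
monomorphism category `Mono(X)` — the objects of the Eilenberg–Moore category of the free
monad whose structure map is a monomorphism — is a resolving subcategory: it is
generating, closed under extensions, under kernels of epimorphisms and under direct
summands; moreover it is closed under subobjects. (Exactness in the Eilenberg–Moore
category is detected on underlying objects.) -/
theorem monoX_resolving_and_closed_under_subobjects
    [Abelian C] (X : C ⥤ C) [PreservesFiniteLimits X] [PreservesFiniteColimits X]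
    (hX : LocallyNilpotent X) :
    -- generating
    (∀ N : XMod X, ∃ (M : XMod X) (p : M ⟶ N), Mono M.str ∧ Epi p.hom) ∧
    -- closed under extensions
    (∀ (A B D : XMod X) (f : A ⟶ B) (g : B ⟶ D) (w : f.hom ≫ g.hom = 0),
      Mono f.hom → Epi g.hom → (ShortComplex.mk f.hom g.hom w).Exact →
      Mono A.str → Mono D.str → Mono B.str) ∧
    -- closed under kernels of epimorphisms
    (∀ (K A B : XMod X) (k : K ⟶ A) (f : A ⟶ B) (w : k.hom ≫ f.hom = 0),
      Mono k.hom → Epi f.hom → (ShortComplex.mk k.hom f.hom w).Exact →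
      Mono A.str → Mono B.str → Mono K.str) ∧
    -- closed under direct summands
    (∀ (K A : XMod X) (i : K ⟶ A) (p : A ⟶ K), i ≫ p = 𝟙 K → Mono A.str → Mono K.str) ∧
    -- closed under subobjects
    (∀ (A B : XMod X) (f : A ⟶ B), Mono f.hom → Mono B.str → Mono A.str) := by
  -- `X` preserves monos
  haveI : X.PreservesMonomorphisms := inferInstance
  -- closure under subobjects (also used for parts 3 and 4)
  have sub : ∀ (A B : XMod X) (f : A ⟶ B), Mono f.hom → Mono B.str → Mono A.str := by
    intro A B f hf hB
    haveI := hf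
    haveI := hB
    haveI : Mono (X.map f.hom) := inferInstance
    haveI : Mono (A.str ≫ f.hom) := by
      rw [f.comm]; exact mono_comp _ _
    exact mono_of_mono A.str f.hom
  refine ⟨?_, ?_, ?_, ?_, fun A B f hf hB => sub A B f hf hB⟩
  · -- generating
    intro N
    obtain ⟨k, hk⟩ := hX N.carrier
    have hzero : IsZero ((fpow X (k + 1)).obj N.carrier) := X.map_isZero hk
    haveI := isIso_fu X N.carrier (k + 1) hzero
    have hfp : inv (fu X N.carrier (k + 1)) ≫ fp X N.str (k + 1) = fp X N.str (k + 2) := by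
      rw [IsIso.inv_comp_eq]
      exact (fu_fp X N.str (k + 1)).symm
    refine ⟨⟨Fc X N.carrier (k + 1), biprod.inr ≫ @inv _ _ (Fc X N.carrier (k + 1)) (Fc X N.carrier (k + 1 + 1)) (fu X N.carrier (k + 1)) _⟩,
      ⟨fp X N.str (k + 1), ?_⟩, ?_, ?_⟩
    · show (biprod.inr ≫ @inv _ _ (Fc X N.carrier (k + 1)) (Fc X N.carrier (k + 1 + 1)) (fu X N.carrier (k + 1)) _) ≫ fp X N.str (k + 1)
        = X.map (fp X N.str (k + 1)) ≫ N.str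
      erw [Category.assoc, hfp]
      show biprod.inr ≫ biprod.desc (𝟙 N.carrier) (X.map (fp X N.str (k + 1)) ≫ N.str) = _
      simp
    · -- the structure map is a mono
      show Mono (biprod.inr ≫ @inv _ _ (Fc X N.carrier (k + 1)) (Fc X N.carrier (k + 1 + 1)) (fu X N.carrier (k + 1)) _)
      haveI : Mono ((biprod.inr : X.obj (Fc X N.carrier (k + 1)) ⟶
          N.carrier ⊞ X.obj (Fc X N.carrier (k + 1))) ≫ biprod.snd) := by
        rw [biprod.inr_snd]; infer_instance
      haveI : Mono (biprod.inr : X.obj (Fc X N.carrier (k + 1)) ⟶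
          N.carrier ⊞ X.obj (Fc X N.carrier (k + 1))) :=
        mono_of_mono _ biprod.snd
      exact @mono_comp _ _ _ _ _ _ this _ (@IsIso.mono_of_iso _ _ _ _ _ (IsIso.inv_isIso (f := fu X N.carrier (k + 1))))
    · -- the projection is an epi
      have hfac : (biprod.inl : N.carrier ⟶ Fc X N.carrier (k + 1)) ≫ fp X N.str (k + 1)
          = 𝟙 N.carrier := by
        show biprod.inl ≫ biprod.desc (𝟙 N.carrier) (X.map (fp X N.str k) ≫ N.str) = _
        simp
      exact epi_of_epi_fac hfac
  · -- closed under extensions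
    intro A B D f g w hf hg hex hA hD
    haveI := hf; haveI := hg; haveI := hA; haveI := hD
    haveI : Mono (ShortComplex.mk f.hom g.hom w).f := hf
    have hmap := hex.map X
    haveI : Mono ((ShortComplex.mk f.hom g.hom w).map X).f :=
      show Mono (X.map f.hom) from inferInstance
    have h2 : kernel.ι B.str ≫ X.map g.hom = 0 := by
      rw [← cancel_mono D.str, Category.assoc, ← g.comm, zero_comp,
        ← Category.assoc, kernel.condition, zero_comp]
    have h3 : hmap.lift (kernel.ι B.str) h2 ≫ X.map f.hom = kernel.ι B.str :=
      hmap.lift_f _ _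
    have h5 : hmap.lift (kernel.ι B.str) h2 ≫ A.str = 0 := by
      rw [← cancel_mono f.hom]
      erw [Category.assoc, f.comm, zero_comp, ← Category.assoc, h3, kernel.condition]
    have h6 : hmap.lift (kernel.ι B.str) h2 = 0 := by
      erw [← cancel_mono A.str, h5, zero_comp]
    have h7 : kernel.ι B.str = 0 := by rw [← h3, h6]; exact zero_comp
    exact Abelian.mono_of_kernel_ι_eq_zero _ h7
  · -- closed under kernels of epimorphisms
    intro K A B k f w hk hf hex hA hB
    exact sub K A k hk hA
  · -- closed under direct summands
    intro K A i p hip hA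
    have h1 : i.hom ≫ p.hom = 𝟙 K.carrier := by
      have := congrArg XModHom.hom hip
      simpa using this
    haveI : Mono (i.hom ≫ p.hom) := by rw [h1]; infer_instance
    exact sub K A i (mono_of_mono i.hom p.hom) hA
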